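/- Let α1, β2 be nonzero real constants. For smooth functions g, m : ℝ → ℝ define the vector fields on ℝ⁶ with coordinates (t,x,y,u,v,w): Y(g) = g ∂x − (x g'/(2α1))(v ∂u − u ∂v) − (x g''/(2β2 α1)) ∂w and W(m) = m (v ∂u − u ∂v) + (m'/β2) ∂w. Then for all smooth g1, g2 : ℝ → ℝ, the Lie bracket satisfies [Y(g1), Y(g2)] = W(−(1/(2α1))(g1 g2' − g2 g1')), so that the generators Y span a Kac–Moody-type subalgebra closing into the center-like generators W. -/

import Mathlib

noncomputable section

/-- ℝ⁶ with coordinates (t,x,y,u,v,w). -/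
abbrev E6 : Type := ℝ × ℝ × ℝ × ℝ × ℝ × ℝ

/-- The Lie bracket of two smooth vector fields on ℝ⁶:
[V,W](p) = DW(p)·V(p) − DV(p)·W(p). -/
def lieBracket (V W : E6 → E6) : E6 → E6 :=
  fun p => fderiv ℝ W p (V p) - fderiv ℝ V p (W p)

/-- The time-reparametrization symmetry generator X(τ) of the constant-coefficient
Davey–Stewartson system (coefficients p₁ = α₁, p₂ = α₂, q₂ = β₂, real form ψ = u+iv):
X(τ) = τ∂t + (τ'/2)(x∂x + y∂y − u∂u − v∂v − 2w∂w) + Φ(v∂u − u∂v) + (Φ_t/β₂)∂w,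
where Φ = −(x²/(8α₁) + y²/(8α₂))τ''. -/
def Xgen (α1 α2 β2 : ℝ) (τ : ℝ → ℝ) : E6 → E6 := fun p =>
  ( τ p.1,
    (deriv τ p.1 / 2) * p.2.1,
    (deriv τ p.1 / 2) * p.2.2.1,
    -(deriv τ p.1 / 2) * p.2.2.2.1
      + (-(p.2.1^2 / (8*α1) + p.2.2.1^2 / (8*α2)) * deriv (deriv τ) p.1) * p.2.2.2.2.1,
    -(-(p.2.1^2 / (8*α1) + p.2.2.1^2 / (8*α2)) * deriv (deriv τ) p.1) * p.2.2.2.1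
      - (deriv τ p.1 / 2) * p.2.2.2.2.1,
    -(deriv τ p.1) * p.2.2.2.2.2
      + (-(p.2.1^2 / (8*α1) + p.2.2.1^2 / (8*α2)) * deriv (deriv (deriv τ)) p.1) / β2 )

/-- The symmetry generator
Y(g) = g∂x − (xg'/(2α₁))(v∂u − u∂v) − (xg''/(2β₂α₁))∂w. -/
def Ygen (α1 β2 : ℝ) (g : ℝ → ℝ) : E6 → E6 := fun p =>
  ( 0,
    g p.1,
    0,
    -(p.2.1 * deriv g p.1 / (2*α1)) * p.2.2.2.2.1,
    (p.2.1 * deriv g p.1 / (2*α1)) * p.2.2.2.1,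
    -(p.2.1 * deriv (deriv g) p.1 / (2*β2*α1)) )

/-- The symmetry generator W(m) = m(v∂u − u∂v) + (m'/β₂)∂w. -/
def Wgen (β2 : ℝ) (m : ℝ → ℝ) : E6 → E6 := fun p =>
  ( 0, 0, 0,
    m p.1 * p.2.2.2.2.1,
    -(m p.1) * p.2.2.2.1,
    deriv m p.1 / β2 )

lemma fderiv_Ygen_apply (α1 β2 : ℝ) (g : ℝ → ℝ) (hg : ContDiff ℝ (⊤:ℕ∞) g) (p q : E6) :
    fderiv ℝ (Ygen α1 β2 g) p q =
    ( 0,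
      deriv g p.1 * q.1,
      0,
      -((q.2.1 * deriv g p.1 + p.2.1 * deriv (deriv g) p.1 * q.1) / (2*α1)) * p.2.2.2.2.1
        - p.2.1 * deriv g p.1 / (2*α1) * q.2.2.2.2.1,
      ((q.2.1 * deriv g p.1 + p.2.1 * deriv (deriv g) p.1 * q.1) / (2*α1)) * p.2.2.2.1
        + p.2.1 * deriv g p.1 / (2*α1) * q.2.2.2.1,
      -((q.2.1 * deriv (deriv g) p.1 + p.2.1 * deriv (deriv (deriv g)) p.1 * q.1) / (2*β2*α1)) ) := by
  have hgd : Differentiable ℝ g := hg.differentiable (by simp)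
  have hg' : ContDiff ℝ (⊤:ℕ∞) (deriv g) := (contDiff_infty_iff_deriv.mp hg).2
  have hg1d : Differentiable ℝ (deriv g) := hg'.differentiable (by simp)
  have hg2d : Differentiable ℝ (deriv (deriv g)) := ((contDiff_infty_iff_deriv.mp hg').2).differentiable (by simp)
  have hT : HasFDerivAt (fun p : E6 => p.1) (ContinuousLinearMap.fst ℝ ℝ _) p := hasFDerivAt_fst
  have hX : HasFDerivAt (fun p : E6 => p.2.1)
      ((ContinuousLinearMap.fst ℝ ℝ _).comp (ContinuousLinearMap.snd ℝ ℝ _)) p :=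
    hasFDerivAt_fst.comp p hasFDerivAt_snd
  have hU : HasFDerivAt (fun p : E6 => p.2.2.2.1)
      ((ContinuousLinearMap.fst ℝ ℝ _).comp ((ContinuousLinearMap.snd ℝ ℝ _).comp
        ((ContinuousLinearMap.snd ℝ ℝ _).comp (ContinuousLinearMap.snd ℝ ℝ _)))) p :=
    hasFDerivAt_fst.comp p (hasFDerivAt_snd.comp p (hasFDerivAt_snd.comp p hasFDerivAt_snd))
  have hV : HasFDerivAt (fun p : E6 => p.2.2.2.2.1)
      ((ContinuousLinearMap.fst ℝ ℝ _).comp ((ContinuousLinearMap.snd ℝ ℝ _).comp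
        ((ContinuousLinearMap.snd ℝ ℝ _).comp ((ContinuousLinearMap.snd ℝ ℝ _).comp
          (ContinuousLinearMap.snd ℝ ℝ _))))) p :=
    hasFDerivAt_fst.comp p (hasFDerivAt_snd.comp p (hasFDerivAt_snd.comp p
      (hasFDerivAt_snd.comp p hasFDerivAt_snd)))
  have hG : HasFDerivAt (fun p : E6 => g p.1) (deriv g p.1 • ContinuousLinearMap.fst ℝ ℝ _) p :=
    ((hgd p.1).hasDerivAt).comp_hasFDerivAt p hT
  have hG1 : HasFDerivAt (fun p : E6 => deriv g p.1)
      (deriv (deriv g) p.1 • ContinuousLinearMap.fst ℝ ℝ _) p :=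
    ((hg1d p.1).hasDerivAt).comp_hasFDerivAt p hT
  have hG2 : HasFDerivAt (fun p : E6 => deriv (deriv g) p.1)
      (deriv (deriv (deriv g)) p.1 • ContinuousLinearMap.fst ℝ ℝ _) p :=
    ((hg2d p.1).hasDerivAt).comp_hasFDerivAt p hT
  have hA : HasFDerivAt (fun p : E6 => p.2.1 * deriv g p.1)
      (p.2.1 • (deriv (deriv g) p.1 • ContinuousLinearMap.fst ℝ ℝ _)
        + deriv g p.1 • ((ContinuousLinearMap.fst ℝ ℝ _).comp (ContinuousLinearMap.snd ℝ ℝ _))) p :=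
    hX.mul hG1
  have hB : HasFDerivAt (fun p : E6 => p.2.1 * deriv (deriv g) p.1)
      (p.2.1 • (deriv (deriv (deriv g)) p.1 • ContinuousLinearMap.fst ℝ ℝ _)
        + deriv (deriv g) p.1 • ((ContinuousLinearMap.fst ℝ ℝ _).comp (ContinuousLinearMap.snd ℝ ℝ _))) p :=
    hX.mul hG2
  have hC1 : HasFDerivAt (fun _ : E6 => (0:ℝ)) (0 : E6 →L[ℝ] ℝ) p := hasFDerivAt_const 0 p
  have c4 := (((hA.mul_const ((2*α1)⁻¹)).neg).mul hV)
  have c5 := ((hA.mul_const ((2*α1)⁻¹)).mul hU)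
  have c6 := ((hB.mul_const ((2*β2*α1)⁻¹)).neg)
  have H := hC1.prodMk (hG.prodMk (hC1.prodMk (c4.prodMk (c5.prodMk c6))))
  have H' : HasFDerivAt (Ygen α1 β2 g) _ p := H
  rw [H'.fderiv]
  simp only [ContinuousLinearMap.prod_apply, ContinuousLinearMap.add_apply,
    ContinuousLinearMap.smul_apply, ContinuousLinearMap.comp_apply,
    ContinuousLinearMap.coe_fst', ContinuousLinearMap.coe_snd',
    ContinuousLinearMap.neg_apply, ContinuousLinearMap.zero_apply, smul_eq_mul, Pi.neg_apply]
  refine Prod.ext rfl (Prod.ext ?_ (Prod.ext rfl (Prod.ext ?_ (Prod.ext ?_ ?_)))) <;> ring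

/-- the Kac–Moody-type commutation relation
[Y(g₁), Y(g₂)] = W(−(1/(2α₁))(g₁g₂' − g₂g₁')). -/
theorem Y_Y_commutation
    (α1 β2 : ℝ) (hα1 : α1 ≠ 0) (hβ2 : β2 ≠ 0)
    (g1 g2 : ℝ → ℝ)
    (hg1 : ContDiff ℝ (⊤ : ℕ∞) g1) (hg2 : ContDiff ℝ (⊤ : ℕ∞) g2) :
    lieBracket (Ygen α1 β2 g1) (Ygen α1 β2 g2)
      = Wgen β2 (fun t => -(1/(2*α1)) * (g1 t * deriv g2 t - g2 t * deriv g1 t)) := by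
  funext p
  have hg1d : Differentiable ℝ g1 := hg1.differentiable (by simp)
  have hg2d : Differentiable ℝ g2 := hg2.differentiable (by simp)
  have hg1' : ContDiff ℝ (⊤:ℕ∞) (deriv g1) := (contDiff_infty_iff_deriv.mp hg1).2
  have hg2' : ContDiff ℝ (⊤:ℕ∞) (deriv g2) := (contDiff_infty_iff_deriv.mp hg2).2
  have hg1'd : Differentiable ℝ (deriv g1) := hg1'.differentiable (by simp)
  have hg2'd : Differentiable ℝ (deriv g2) := hg2'.differentiable (by simp)
  have hm : deriv (fun t => -(1/(2*α1)) * (g1 t * deriv g2 t - g2 t * deriv g1 t)) p.1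
      = -(1/(2*α1)) * ((deriv g1 p.1 * deriv g2 p.1 + g1 p.1 * deriv (deriv g2) p.1)
        - (deriv g2 p.1 * deriv g1 p.1 + g2 p.1 * deriv (deriv g1) p.1)) := by
    have H : HasDerivAt (fun t => -(1/(2*α1)) * (g1 t * deriv g2 t - g2 t * deriv g1 t))
        (-(1/(2*α1)) * ((deriv g1 p.1 * deriv g2 p.1 + g1 p.1 * deriv (deriv g2) p.1)
          - (deriv g2 p.1 * deriv g1 p.1 + g2 p.1 * deriv (deriv g1) p.1))) p.1 :=
      (((hg1d p.1).hasDerivAt.mul (hg2'd p.1).hasDerivAt).sub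
        ((hg2d p.1).hasDerivAt.mul (hg1'd p.1).hasDerivAt)).const_mul (-(1/(2*α1)))
    exact H.deriv
  have h1 := fderiv_Ygen_apply α1 β2 g2 hg2 p (Ygen α1 β2 g1 p)
  have h2 := fderiv_Ygen_apply α1 β2 g1 hg1 p (Ygen α1 β2 g2 p)
  simp only [Ygen] at h1 h2
  simp only [lieBracket, Ygen, Wgen]
  rw [h1, h2, hm, Prod.mk_sub_mk, Prod.mk_sub_mk, Prod.mk_sub_mk, Prod.mk_sub_mk,
    Prod.mk_sub_mk]
  refine Prod.ext (by ring) (Prod.ext (by ring) (Prod.ext (by ring)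
    (Prod.ext ?_ (Prod.ext ?_ ?_)))) <;> field_simp <;> ring
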